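/- Let n be an odd integer, n ≥ 3, and let Q be a family of 3-element subsets of [n]. If there exist two distinct balls x,y ∈ [n] whose co-degree satisfies d_Q(x,y) < (n−2)/2, then Q does not determine a non-minority ball; that is, there exists an answer function a for Q admitting at least one legal coloring such that for every ball b ∈ [n] there is a coloring legal for a under which b is not a non-minority ball of [n]. -/

import Mathlib

/-- `b` is a majority ball of `A` under coloring `c`:
strictly more than `|A|/2` balls of `A` have color `c b`. -/
def majBall {n : ℕ} (c : Fin n → Bool) (A : Finset (Fin n)) (b : Fin n) : Prop :=
  b ∈ A ∧ A.card < 2 * (A.filter fun x => c x = c b).card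

/-- `b` is a non-minority ball of `A` under coloring `c`:
at least `|A|/2` balls of `A` have color `c b`. -/
def nonMinBall {n : ℕ} (c : Fin n → Bool) (A : Finset (Fin n)) (b : Fin n) : Prop :=
  b ∈ A ∧ A.card ≤ 2 * (A.filter fun x => c x = c b).card

/-- A coloring `c` is legal for the answer function `a` on the query set `Q`. -/
def Legal {n : ℕ} (Q : Finset (Finset (Fin n))) (a : Finset (Fin n) → Fin n)
    (c : Fin n → Bool) : Prop :=
  ∀ T ∈ Q, majBall c T (a T)

/-- The query set `Q` determines a non-minority ball. -/
def Determines {n : ℕ} (Q : Finset (Finset (Fin n))) : Prop :=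
  ∀ a : Finset (Fin n) → Fin n, (∀ T ∈ Q, a T ∈ T) → (∃ c, Legal Q a c) →
    ∃ b : Fin n, ∀ c : Fin n → Bool, Legal Q a c → nonMinBall c Finset.univ b

/-- Co-degree: the number of queries of `Q` containing both `x` and `y`. -/
def codeg {n : ℕ} (Q : Finset (Finset (Fin n))) (x y : Fin n) : ℕ :=
  (Q.filter fun T => x ∈ T ∧ y ∈ T).card

namespace Stmt0Aux

def g0 : Fin 4 → Bool := fun t => t == 0 || t == 2
def g1 : Fin 4 → Bool := fun t => t == 1 || t == 2
def g2 : Fin 4 → Bool := fun t => t == 3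

def cnt (g : Fin 4 → Bool) (a b c u : Fin 4) : ℕ :=
  (if g a = g u then 1 else 0) + (if g b = g u then 1 else 0) + (if g c = g u then 1 else 0)

lemma core : ∀ t1 t2 t3 : Fin 4,
    ((t1 = 0 ∨ t2 = 0 ∨ t3 = 0) → (t1 = 1 ∨ t2 = 1 ∨ t3 = 1) → (t1 = 2 ∨ t2 = 2 ∨ t3 = 2)) →
    ∃ u : Fin 4, (u = t1 ∨ u = t2 ∨ u = t3) ∧
      3 < 2 * cnt g0 t1 t2 t3 u ∧ 3 < 2 * cnt g1 t1 t2 t3 u ∧ 3 < 2 * cnt g2 t1 t2 t3 u := by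
  decide

lemma card_filter_triple {α : Type*} [DecidableEq α] {p q r : α} (hpq : p ≠ q) (hpr : p ≠ r)
    (hqr : q ≠ r) (P : α → Prop) [DecidablePred P] :
    (({p, q, r} : Finset α).filter P).card =
      (if P p then 1 else 0) + (if P q then 1 else 0) + (if P r then 1 else 0) := by
  rw [Finset.filter_insert, Finset.filter_insert, Finset.filter_singleton]
  by_cases hp : P p <;> by_cases hq : P q <;> by_cases hr : P r <;>
    simp [hp, hq, hr, Finset.card_insert_of_notMem, hpq, hpr, hqr, Finset.mem_insert]

def tau {n : ℕ} [DecidableEq (Fin n)] (x y : Fin n) (A : Finset (Fin n)) (v : Fin n) : Fin 4 :=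
  if v = x then 0 else if v = y then 1 else if v ∈ A then 2 else 3

lemma tau_iffs {n : ℕ} [DecidableEq (Fin n)] {x y : Fin n} {A : Finset (Fin n)}
    (hxy : x ≠ y) (hxA : x ∉ A) (hyA : y ∉ A) (v : Fin n) :
    (tau x y A v = 0 ↔ v = x) ∧ (tau x y A v = 1 ↔ v = y) ∧ (tau x y A v = 2 ↔ v ∈ A) := by
  unfold tau
  split_ifs with h1 h2 h3 <;> subst_eqs <;> simp_all

end Stmt0Aux

open Stmt0Aux

theorem stmt_0 (n : ℕ) (hodd : Odd n) (hn : 3 ≤ n) (Q : Finset (Finset (Fin n)))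
    (hQ3 : ∀ T ∈ Q, T.card = 3) (x y : Fin n) (hxy : x ≠ y)
    (hcod : 2 * codeg Q x y < n - 2) :
    ∃ a : Finset (Fin n) → Fin n, (∀ T ∈ Q, a T ∈ T) ∧ (∃ c, Legal Q a c) ∧
      ∀ b : Fin n, ∃ c : Fin n → Bool, Legal Q a c ∧ ¬ nonMinBall c Finset.univ b := by
  classical
  obtain ⟨m, hm⟩ := hodd
  have hm1 : 1 ≤ m := by omega
  -- the set of balls other than x, y
  set O : Finset (Fin n) := Finset.univ \ {x, y} with hO
  have hOcard : O.card = n - 2 := by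
    rw [hO, Finset.card_sdiff_of_subset (Finset.subset_univ _), Finset.card_univ, Fintype.card_fin,
      Finset.card_insert_of_notMem (by simp [hxy]), Finset.card_singleton]
  -- the set of third elements of queries containing both x and y
  set Z : Finset (Fin n) := O.filter (fun z => ({x, y, z} : Finset (Fin n)) ∈ Q) with hZ
  have hZcard : Z.card ≤ codeg Q x y := by
    apply Finset.card_le_card_of_injOn (fun z => ({x, y, z} : Finset (Fin n)))
    · intro z hz
      rw [hZ, Finset.mem_coe, Finset.mem_filter] at hz
      simp only [codeg, Finset.mem_coe, Finset.mem_filter]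
      exact ⟨hz.2, by simp, by simp⟩
    · intro z1 h1 z2 h2 he
      rw [Finset.coe_filter, Set.mem_setOf_eq] at h1 h2
      dsimp only at he
      have hz2 : z2 ∈ ({x, y, z1} : Finset (Fin n)) := by rw [he]; simp
      have h2O : z2 ∈ O := h2.1
      rw [hO, Finset.mem_sdiff] at h2O
      simp only [Finset.mem_insert, Finset.mem_singleton] at hz2 h2O
      tauto
  have hZm : Z.card ≤ m - 1 := by omega
  -- A : a set of m-1 elements of O containing Z
  have hZO : Z ⊆ O := Finset.filter_subset _ _
  obtain ⟨A, hZA, hAO, hAcard⟩ :=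
    Finset.exists_subsuperset_card_eq hZO hZm (by omega : m - 1 ≤ O.card)
  have hxA : x ∉ A := fun h => by have := hAO h; rw [hO, Finset.mem_sdiff] at this; simp at this
  have hyA : y ∉ A := fun h => by have := hAO h; rw [hO, Finset.mem_sdiff] at this; simp at this
  -- type function and the three colorings
  set τ : Fin n → Fin 4 := tau x y A with hτ
  have hτ0 : ∀ v, τ v = 0 ↔ v = x := fun v => (tau_iffs hxy hxA hyA v).1
  have hτ1 : ∀ v, τ v = 1 ↔ v = y := fun v => (tau_iffs hxy hxA hyA v).2.1
  have hτ2 : ∀ v, τ v = 2 ↔ v ∈ A := fun v => (tau_iffs hxy hxA hyA v).2.2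
  set c0 : Fin n → Bool := fun v => g0 (τ v) with hc0
  set c1 : Fin n → Bool := fun v => g1 (τ v) with hc1
  set c2 : Fin n → Bool := fun v => g2 (τ v) with hc2
  -- key: every query has a ball simultaneously majority for all three colorings
  have key : ∀ T ∈ Q, ∃ u, u ∈ T ∧ majBall c0 T u ∧ majBall c1 T u ∧ majBall c2 T u := by
    intro T hT
    have hcard3 := hQ3 T hT
    obtain ⟨p, q, r, hpq, hpr, hqr, rfl⟩ := Finset.card_eq_three.1 hcard3
    have hcon : (τ p = 0 ∨ τ q = 0 ∨ τ r = 0) → (τ p = 1 ∨ τ q = 1 ∨ τ r = 1) →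
        (τ p = 2 ∨ τ q = 2 ∨ τ r = 2) := by
      intro h0 h1
      have hxT : x ∈ ({p, q, r} : Finset (Fin n)) := by
        rcases h0 with h | h | h <;> rw [hτ0] at h <;> subst h <;> simp
      have hyT : y ∈ ({p, q, r} : Finset (Fin n)) := by
        rcases h1 with h | h | h <;> rw [hτ1] at h <;> subst h <;> simp
      -- the third element z of T
      have hsub : ({x, y} : Finset (Fin n)) ⊆ {p, q, r} := by
        intro v hv; simp only [Finset.mem_insert, Finset.mem_singleton] at hv
        rcases hv with rfl | rfl; exacts [hxT, hyT]
      have hdiff : (({p, q, r} : Finset (Fin n)) \ {x, y}).card = 1 := by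
        rw [Finset.card_sdiff_of_subset hsub, hcard3,
          Finset.card_insert_of_notMem (by simp [hxy]), Finset.card_singleton]
      obtain ⟨z, hzeq⟩ := Finset.card_eq_one.1 hdiff
      have hzmem : z ∈ ({p, q, r} : Finset (Fin n)) \ {x, y} := by rw [hzeq]; simp
      rw [Finset.mem_sdiff] at hzmem
      obtain ⟨hzT, hzxy⟩ := hzmem
      simp only [Finset.mem_insert, Finset.mem_singleton, not_or] at hzxy
      -- T = {x, y, z}
      have hTeq : ({x, y, z} : Finset (Fin n)) = {p, q, r} := by
        apply Finset.eq_of_subset_of_card_le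
        · intro v hv; simp only [Finset.mem_insert, Finset.mem_singleton] at hv
          rcases hv with rfl | rfl | rfl; exacts [hxT, hyT, hzT]
        · rw [hcard3]
          rw [Finset.card_insert_of_notMem
            (by simp only [Finset.mem_insert, Finset.mem_singleton]; push_neg
                exact ⟨hxy, fun h => hzxy.1 h.symm⟩),
            Finset.card_insert_of_notMem (by simp [Ne.symm hzxy.2]),
            Finset.card_singleton]
      have hzZ : z ∈ Z := by
        rw [hZ, Finset.mem_filter]
        refine ⟨?_, by rw [hTeq]; exact hT⟩
        rw [hO, Finset.mem_sdiff]
        simp [hzxy.1, hzxy.2]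
      have hzA : z ∈ A := hZA hzZ
      have hz2 : τ z = 2 := (hτ2 z).2 hzA
      simp only [Finset.mem_insert, Finset.mem_singleton] at hzT
      rcases hzT with rfl | rfl | rfl
      · exact Or.inl hz2
      · exact Or.inr (Or.inl hz2)
      · exact Or.inr (Or.inr hz2)
    obtain ⟨u, hu, m0, m1, m2⟩ := core (τ p) (τ q) (τ r) hcon
    obtain ⟨e, he, heu⟩ : ∃ e, e ∈ ({p, q, r} : Finset (Fin n)) ∧ τ e = u := by
      rcases hu with h | h | h
      · exact ⟨p, by simp, h.symm⟩
      · exact ⟨q, by simp, h.symm⟩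
      · exact ⟨r, by simp, h.symm⟩
    have hfilt : ∀ g : Fin 4 → Bool,
        (({p, q, r} : Finset (Fin n)).filter fun v => g (τ v) = g (τ e)).card
          = cnt g (τ p) (τ q) (τ r) u := by
      intro g
      rw [card_filter_triple hpq hpr hqr, cnt, heu]
    refine ⟨e, he, ⟨he, ?_⟩, ⟨he, ?_⟩, ⟨he, ?_⟩⟩
    · rw [hcard3, hc0]; rw [hfilt g0]; exact m0
    · rw [hcard3, hc1]; rw [hfilt g1]; exact m1
    · rw [hcard3, hc2]; rw [hfilt g2]; exact m2
  -- the answer function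
  set a : Finset (Fin n) → Fin n := fun T =>
    if h : ∃ u, u ∈ T ∧ majBall c0 T u ∧ majBall c1 T u ∧ majBall c2 T u then h.choose else x
    with ha
  have haT : ∀ T ∈ Q, a T ∈ T ∧ majBall c0 T (a T) ∧ majBall c1 T (a T) ∧ majBall c2 T (a T) := by
    intro T hT
    have h := key T hT
    rw [ha]
    simp only [dif_pos h]
    exact h.choose_spec
  refine ⟨a, fun T hT => (haT T hT).1, ⟨c0, fun T hT => (haT T hT).2.1⟩, ?_⟩
  -- class sizes
  have hclassx : (Finset.univ.filter fun v => c0 v = true) = insert x A := by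
    ext v
    simp only [Finset.mem_filter, Finset.mem_univ, true_and, Finset.mem_insert, hc0, g0,
      Bool.or_eq_true, beq_iff_eq]
    rw [hτ0, hτ2]
  have hclassy : (Finset.univ.filter fun v => c1 v = true) = insert y A := by
    ext v
    simp only [Finset.mem_filter, Finset.mem_univ, true_and, Finset.mem_insert, hc1, g1,
      Bool.or_eq_true, beq_iff_eq]
    rw [hτ1, hτ2]
  have hclass2 : (Finset.univ.filter fun v => c2 v = true) = O \ A := by
    ext v
    simp only [Finset.mem_filter, Finset.mem_univ, true_and, Finset.mem_sdiff, hc2, g2,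
      beq_iff_eq]
    constructor
    · intro h3
      have h0 : v ≠ x := fun h => by rw [← hτ0 v] at h; rw [h] at h3; exact absurd h3 (by decide)
      have h1 : v ≠ y := fun h => by rw [← hτ1 v] at h; rw [h] at h3; exact absurd h3 (by decide)
      have h2 : v ∉ A := fun h => by rw [← hτ2 v] at h; rw [h] at h3; exact absurd h3 (by decide)
      exact ⟨by rw [hO, Finset.mem_sdiff]; simp [h0, h1], h2⟩
    · intro ⟨hvO, hvA⟩
      rw [hO, Finset.mem_sdiff] at hvO
      simp only [Finset.mem_insert, Finset.mem_singleton, not_or] at hvO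
      rw [hτ]; unfold tau
      rw [if_neg hvO.2.1, if_neg hvO.2.2, if_neg hvA]
  have hcx : (Finset.univ.filter fun v => c0 v = true).card = m := by
    rw [hclassx, Finset.card_insert_of_notMem hxA, hAcard]; omega
  have hcy : (Finset.univ.filter fun v => c1 v = true).card = m := by
    rw [hclassy, Finset.card_insert_of_notMem hyA, hAcard]; omega
  have hc2' : (Finset.univ.filter fun v => c2 v = true).card = m := by
    rw [hclass2, Finset.card_sdiff_of_subset hAO, hOcard, hAcard]; omega
  -- helper: true-class of size m means not non-minority
  have notmin : ∀ (c : Fin n → Bool) (b : Fin n), c b = true →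
      (Finset.univ.filter fun v => c v = true).card = m → ¬ nonMinBall c Finset.univ b := by
    intro c b hcb hcard h
    obtain ⟨-, hle⟩ := h
    rw [hcb] at hle
    rw [hcard, Finset.card_univ, Fintype.card_fin] at hle
    omega
  intro b
  have h4 : τ b = 0 ∨ τ b = 1 ∨ τ b = 2 ∨ τ b = 3 := by
    generalize τ b = t; revert t; decide
  have legal0 : Legal Q a c0 := fun T hT => (haT T hT).2.1
  have legal1 : Legal Q a c1 := fun T hT => (haT T hT).2.2.1
  have legal2 : Legal Q a c2 := fun T hT => (haT T hT).2.2.2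
  rcases h4 with h | h | h | h
  · exact ⟨c0, legal0, notmin c0 b (by simp only [hc0]; rw [h]; rfl) hcx⟩
  · exact ⟨c1, legal1, notmin c1 b (by simp only [hc1]; rw [h]; rfl) hcy⟩
  · exact ⟨c0, legal0, notmin c0 b (by simp only [hc0]; rw [h]; rfl) hcx⟩
  · exact ⟨c2, legal2, notmin c2 b (by simp only [hc2]; rw [h]; rfl) hc2'⟩
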